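/- For every natural number n there exists a unique family of rational numbers Ψ_k(n), 0 ≤ k ≤ ⌊n/2⌋, such that for all complex numbers x, y: x^n + y^n = (x + y)^(δ(n)) · ∑_{k=0}^{⌊n/2⌋} Ψ_k(n) · (x·y)^(⌊n/2⌋ − k) · (x² + y²)^k; moreover, every Ψ_k(n) in this family is an integer. -/

import Mathlib

def psiZ : ℕ → ℕ → ℤ
  | 0, k => if k = 0 then 2 else 0
  | 1, k => if k = 0 then 1 else 0
  | 2, k => if k = 1 then 1 else 0
  | 3, k => if k = 0 then -1 else if k = 1 then 1 else 0
  | (n+4), k => (if k = 0 then 0 else psiZ (n+2) (k-1)) - psiZ n k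

lemma psiZ_eq_zero (n : ℕ) : ∀ k, n / 2 < k → psiZ n k = 0 := by
  induction n using Nat.strong_induction_on with
  | _ n ih =>
    match n with
    | 0 => intro k hk; rw [psiZ, if_neg (by omega : k ≠ 0)]
    | 1 => intro k hk; rw [psiZ, if_neg (by omega : k ≠ 0)]
    | 2 => intro k hk; rw [psiZ, if_neg (by omega : k ≠ 1)]
    | 3 => intro k hk; rw [psiZ, if_neg (by omega : k ≠ 0), if_neg (by omega : k ≠ 1)]
    | (n+4) =>
      intro k hk
      rw [psiZ, if_neg (by omega : k ≠ 0),
        ih (n+2) (by omega) (k-1) (by omega), ih n (by omega) k (by omega)]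
      ring

lemma psiZ_key (n : ℕ) : ∀ x y : ℂ, x ^ n + y ^ n =
    (x + y) ^ (n % 2) * ∑ k ∈ Finset.range (n / 2 + 1),
      (psiZ n k : ℂ) * (x * y) ^ (n / 2 - k) * (x ^ 2 + y ^ 2) ^ k := by
  induction n using Nat.strong_induction_on with
  | _ n ih =>
    match n with
    | 0 => intro x y; norm_num [psiZ]
    | 1 => intro x y; norm_num [psiZ]
    | 2 => intro x y; norm_num [Finset.sum_range_succ, psiZ]
    | 3 => intro x y; norm_num [Finset.sum_range_succ, psiZ]; ring
    | (n+4) =>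
      intro x y
      have h2 := ih (n+2) (by omega) x y
      have h0 := ih n (by omega) x y
      have hrec : x ^ (n+4) + y ^ (n+4) =
          (x^2 + y^2) * (x ^ (n+2) + y ^ (n+2)) - (x*y)^2 * (x ^ n + y ^ n) := by ring
      have hmod2 : (n+2) % 2 = (n+4) % 2 := by omega
      have hmod0 : n % 2 = (n+4) % 2 := by omega
      rw [hrec, h2, h0, hmod2, hmod0]
      have hd2 : (n+2)/2 = n/2 + 1 := by omega
      have hd4 : (n+4)/2 = n/2 + 2 := by omega
      rw [hd2, hd4]
      set a := n / 2 with ha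
      set p : ℂ := x * y with hp
      set s : ℂ := x^2 + y^2 with hs
      set e : ℂ := (x+y)^((n+4)%2) with he
      -- reduce to equality of bracketed sums
      have goal' : s * ∑ k ∈ Finset.range (a+2), (psiZ (n+2) k : ℂ) * p ^ (a+1-k) * s ^ k
          - p^2 * ∑ k ∈ Finset.range (a+1), (psiZ n k : ℂ) * p ^ (a-k) * s ^ k
          = ∑ k ∈ Finset.range (a+3), (psiZ (n+4) k : ℂ) * p ^ (a+2-k) * s ^ k := by
        have hsplit : ∀ k, (psiZ (n+4) k : ℂ)
            = (if k = 0 then 0 else (psiZ (n+2) (k-1) : ℂ)) - (psiZ n k : ℂ) := by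
          intro k
          rw [psiZ]
          split <;> push_cast <;> ring
        have : ∑ k ∈ Finset.range (a+3), (psiZ (n+4) k : ℂ) * p ^ (a+2-k) * s ^ k
            = (∑ k ∈ Finset.range (a+3),
                (if k = 0 then 0 else (psiZ (n+2) (k-1) : ℂ)) * p ^ (a+2-k) * s ^ k)
              - ∑ k ∈ Finset.range (a+3), (psiZ n k : ℂ) * p ^ (a+2-k) * s ^ k := by
          rw [← Finset.sum_sub_distrib]
          exact Finset.sum_congr rfl fun k _ => by rw [hsplit]; ring
        have hA : ∑ k ∈ Finset.range (a+3),
            (if k = 0 then 0 else (psiZ (n+2) (k-1) : ℂ)) * p ^ (a+2-k) * s ^ k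
            = s * ∑ k ∈ Finset.range (a+2), (psiZ (n+2) k : ℂ) * p ^ (a+1-k) * s ^ k := by
          rw [Finset.sum_range_succ' (fun k =>
            (if k = 0 then 0 else (psiZ (n+2) (k-1) : ℂ)) * p ^ (a+2-k) * s ^ k) (a+2)]
          norm_num [Finset.mul_sum]
          refine Finset.sum_congr rfl fun i hi => ?_
          simp only [Finset.mem_range] at hi
          have hxx : a + 2 - (i + 1) = a + 1 - i := by omega
          rw [hxx]
          ring
        have hB : ∑ k ∈ Finset.range (a+3), (psiZ n k : ℂ) * p ^ (a+2-k) * s ^ k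
            = p^2 * ∑ k ∈ Finset.range (a+1), (psiZ n k : ℂ) * p ^ (a-k) * s ^ k := by
          have hsub : ∑ k ∈ Finset.range (a+3), (psiZ n k : ℂ) * p ^ (a+2-k) * s ^ k
              = ∑ k ∈ Finset.range (a+1), (psiZ n k : ℂ) * p ^ (a+2-k) * s ^ k := by
            refine (Finset.sum_subset (by intro z hz; simp only [Finset.mem_range] at *; omega)
              fun k _ hk => ?_).symm
            simp only [Finset.mem_range, not_lt] at hk
            rw [psiZ_eq_zero n k (by omega)]
            norm_num
          rw [hsub, Finset.mul_sum]
          refine Finset.sum_congr rfl fun k hk => ?_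
          simp only [Finset.mem_range] at hk
          have hxx : a + 2 - k = (a - k) + 2 := by omega
          rw [hxx, pow_add]
          ring
        rw [this, hA, hB]
      rw [← goal']
      ring

lemma psi_uniq (n : ℕ) (c : ℕ → ℚ)
    (hc0 : ∀ k, n / 2 < k → c k = 0)
    (hc : ∀ x y : ℂ, x ^ n + y ^ n =
      (x + y) ^ (n % 2) * ∑ k ∈ Finset.range (n / 2 + 1),
        (c k : ℂ) * (x * y) ^ (n / 2 - k) * (x ^ 2 + y ^ 2) ^ k) :
    c = fun k => (psiZ n k : ℚ) := by
  set Q : Polynomial ℂ := ∑ k ∈ Finset.range (n / 2 + 1),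
    Polynomial.C ((c k : ℂ) - (psiZ n k : ℂ)) * Polynomial.X ^ k with hQ
  have hroot : ∀ t : ℂ, t ≠ -2 → Q.eval t = 0 := by
    intro t ht
    obtain ⟨w, hw⟩ := IsAlgClosed.exists_pow_nat_eq (k := ℂ) (t ^ 2 - 4) (n := 2) (by norm_num)
    have hex : ∃ u : ℂ, u ≠ 0 ∧ u ≠ -1 ∧ u ^ 2 + 1 = t * u := by
      refine ⟨(t + w) / 2, ?_, ?_, ?_⟩
      · intro h
        have hw' : w = -t := by linear_combination 2 * h
        rw [hw'] at hw
        have : (0 : ℂ) = -4 := by linear_combination hw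
        norm_num at this
      · intro h
        have hw' : w = -t - 2 := by linear_combination 2 * h
        rw [hw'] at hw
        exact ht (by linear_combination hw / 4)
      · field_simp
        linear_combination hw
    obtain ⟨u, hu0, hu1, huq⟩ := hex
    obtain ⟨x, hx⟩ := IsAlgClosed.exists_pow_nat_eq (k := ℂ) u (n := 2) (by norm_num)
    have hx0 : x ≠ 0 := by
      intro h; rw [h] at hx; exact hu0 (by simpa using hx.symm)
    set y : ℂ := x⁻¹ with hy
    have hxy : x * y = 1 := mul_inv_cancel₀ hx0
    have hy2 : y ^ 2 = u⁻¹ := by rw [hy, inv_pow, hx]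
    have huinv : u + u⁻¹ = t := by
      field_simp
      linear_combination huq
    have hst : x ^ 2 + y ^ 2 = t := by rw [hx, hy2, huinv]
    have hxyne : x + y ≠ 0 := by
      intro h
      have hxx : x * (x + y) = u + 1 := by
        rw [hy]
        field_simp
        linear_combination hx
      rw [h, mul_zero] at hxx
      exact hu1 (by linear_combination -hxx)
    have heq := (hc x y).symm.trans (psiZ_key n x y)
    have hsum : ∑ k ∈ Finset.range (n / 2 + 1),
        (c k : ℂ) * (x * y) ^ (n / 2 - k) * (x ^ 2 + y ^ 2) ^ k
        = ∑ k ∈ Finset.range (n / 2 + 1),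
        (psiZ n k : ℂ) * (x * y) ^ (n / 2 - k) * (x ^ 2 + y ^ 2) ^ k :=
      mul_left_cancel₀ (pow_ne_zero _ hxyne) heq
    rw [hxy, hst] at hsum
    simp only [one_pow, mul_one] at hsum
    simp only [hQ, Polynomial.eval_finset_sum, Polynomial.eval_mul, Polynomial.eval_C,
      Polynomial.eval_pow, Polynomial.eval_X, sub_mul]
    rw [Finset.sum_sub_distrib, sub_eq_zero]
    exact hsum
  have hQ0 : Q = 0 := by
    refine Polynomial.eq_zero_of_infinite_isRoot Q ?_
    refine Set.Infinite.mono ?_ ((Set.finite_singleton (-2 : ℂ)).infinite_compl)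
    intro t htc
    simp only [Set.mem_compl_iff, Set.mem_singleton_iff] at htc
    exact hroot t htc
  funext k
  by_cases hk : n / 2 < k
  · simp [hc0 k hk, psiZ_eq_zero n k hk]
  · have hcoeff : Q.coeff k = (c k : ℂ) - (psiZ n k : ℂ) := by
      simp only [hQ, Polynomial.finset_sum_coeff, Polynomial.coeff_C_mul,
        Polynomial.coeff_X_pow]
      rw [Finset.sum_eq_single k]
      · simp
      · intro b _ hb
        simp [Ne.symm hb]
      · intro hkm
        exact absurd (Finset.mem_range.mpr (by omega)) hkm
    rw [hQ0] at hcoeff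
    simp only [Polynomial.coeff_zero] at hcoeff
    have : (c k : ℂ) = ((psiZ n k : ℚ) : ℂ) := by
      push_cast
      linear_combination -hcoeff
    exact_mod_cast this

theorem psi_exists_unique_int (n : ℕ) :
    (∃! c : ℕ → ℚ,
      (∀ k, n / 2 < k → c k = 0) ∧
      ∀ x y : ℂ, x ^ n + y ^ n =
        (x + y) ^ (n % 2) * ∑ k ∈ Finset.range (n / 2 + 1),
          (c k : ℂ) * (x * y) ^ (n / 2 - k) * (x ^ 2 + y ^ 2) ^ k) ∧
    (∀ c : ℕ → ℚ,
      ((∀ k, n / 2 < k → c k = 0) ∧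
      ∀ x y : ℂ, x ^ n + y ^ n =
        (x + y) ^ (n % 2) * ∑ k ∈ Finset.range (n / 2 + 1),
          (c k : ℂ) * (x * y) ^ (n / 2 - k) * (x ^ 2 + y ^ 2) ^ k) →
      ∀ k ≤ n / 2, ∃ z : ℤ, c k = (z : ℚ)) := by
  constructor
  · refine ⟨fun k => (psiZ n k : ℚ), ⟨?_, ?_⟩, ?_⟩
    · intro k hk
      simp [psiZ_eq_zero n k hk]
    · intro x y
      rw [psiZ_key n x y]
      norm_cast
    · intro c hc
      exact psi_uniq n c hc.1 hc.2
  · intro c hc k _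
    have h := psi_uniq n c hc.1 hc.2
    exact ⟨psiZ n k, by rw [h]⟩
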